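/- The second-order Taylor coefficient at x = 0 of F(x) := E(p,q,E(a,b,x,−x),E(c,d,x,−x)) − E(p,q,x,−x) equals (a + b + c + d)/12 − (p+q)/6; hence if the invariance equation S_{p,q}(S_{a,b}(x,y),S_{c,d}(x,y)) = S_{p,q}(x,y) holds for all positive x,y, then (a+b+c+d)/4 = (p+q)/2. -/

import Mathlib

open Real Filter Topology

noncomputable def hh (p : ℝ) : ℝ → ℝ := fun x => dslope (fun t => Real.sinh (p * t)) 0 x / p

lemma sinh_comp_hasDerivAt (p y : ℝ) :
    HasDerivAt (fun t => Real.sinh (p * t)) (Real.cosh (p * y) * p) y := by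
  simpa [mul_comm, Function.comp_def] using (Real.hasDerivAt_sinh (p * y)).comp y ((hasDerivAt_id y).const_mul p)

lemma hh_zero {p : ℝ} (hp : p ≠ 0) : hh p 0 = 1 := by
  simp only [hh, dslope_same, (sinh_comp_hasDerivAt p 0).deriv, Real.cosh_zero, one_mul]
  field_simp
  simp

lemma hh_of_ne {p x : ℝ} (hx : x ≠ 0) : hh p x = Real.sinh (p * x) / (p * x) := by
  rw [hh, dslope_of_ne _ hx, slope_def_field]
  simp only [mul_zero, Real.sinh_zero, sub_zero]
  rw [div_div]
  ring_nf

lemma hh_pos {p : ℝ} (hp : p ≠ 0) (x : ℝ) : 0 < hh p x := by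
  rcases eq_or_ne x 0 with rfl | hx
  · rw [hh_zero hp]; norm_num
  · rw [hh_of_ne hx]
    rcases lt_or_gt_of_ne (mul_ne_zero hp hx) with h | h
    · exact div_pos_of_neg_of_neg (Real.sinh_neg_iff.2 h) h
    · exact div_pos (Real.sinh_pos_iff.2 h) h

lemma hh_analyticAt {p : ℝ} (hp : p ≠ 0) : AnalyticAt ℝ (hh p) 0 := by
  have hs : AnalyticAt ℝ (fun t => Real.sinh (p * t)) 0 := by
    have : (fun t : ℝ => Real.sinh (p * t)) = fun t => (Real.exp (p * t) - Real.exp (-(p * t))) / 2 := by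
      funext t; rw [Real.sinh_eq]
    rw [this]
    exact ((analyticAt_rexp.comp (analyticAt_const.mul analyticAt_id)).sub
      (analyticAt_rexp.comp (analyticAt_const.mul analyticAt_id).neg)).div analyticAt_const two_ne_zero
  obtain ⟨ps, hps⟩ := hs
  have : AnalyticAt ℝ (dslope (fun t => Real.sinh (p * t)) 0) 0 :=
    ⟨ps.fslope, hps.has_fpower_series_dslope_fslope⟩
  exact this.div analyticAt_const hp

lemma AnalyticAt.deriv'' {f : ℝ → ℝ} {x : ℝ} (h : AnalyticAt ℝ f x) :
    AnalyticAt ℝ (deriv f) x := by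
  obtain ⟨s, hs, hf⟩ := h.eventually_analyticAt.exists_mem
  exact AnalyticOnNhd.deriv (fun y hy => hf y hy) x (mem_of_mem_nhds hs)

lemma ev_analytic {f : ℝ → ℝ} (h : AnalyticAt ℝ f 0) :
    ∀ᶠ y in 𝓝 (0:ℝ), AnalyticAt ℝ f y := h.eventually_analyticAt

lemma ev_deriv_analytic {f : ℝ → ℝ} (h : AnalyticAt ℝ f 0) :
    ∀ᶠ y in 𝓝 (0:ℝ), AnalyticAt ℝ (deriv f) y := by
  obtain ⟨s, hs, hf⟩ := h.eventually_analyticAt.exists_mem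
  filter_upwards [hs] with y hy
  exact AnalyticOnNhd.deriv (fun z hz => hf z hz) y hy

lemma xh_eq {p : ℝ} (hp : p ≠ 0) (x : ℝ) : x * hh p x = Real.sinh (p * x) / p := by
  rcases eq_or_ne x 0 with rfl | hx
  · simp
  · rw [hh_of_ne hx]; field_simp

lemma deriv_hh_zero {p : ℝ} (hp : p ≠ 0) : deriv (hh p) 0 = 0 := by
  have hA := hh_analyticAt hp
  have Eq1 : ∀ᶠ y in 𝓝 (0:ℝ), hh p y + y * deriv (hh p) y = Real.cosh (p * y) := by
    filter_upwards [ev_analytic hA] with y hy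
    have h1 : deriv (fun x => x * hh p x) y = 1 * hh p y + y * deriv (hh p) y :=
      ((hasDerivAt_id y).mul hy.differentiableAt.hasDerivAt).deriv
    have hfun : (fun x => x * hh p x) = fun x => Real.sinh (p * x) / p := funext (xh_eq hp)
    have h2 : deriv (fun x => x * hh p x) y = Real.cosh (p * y) := by
      rw [hfun, ((sinh_comp_hasDerivAt p y).div_const p).deriv]
      field_simp
    rw [h2] at h1; linarith
  have Eq2 : ∀ᶠ y in 𝓝 (0:ℝ),
      2 * deriv (hh p) y + y * deriv (deriv (hh p)) y = Real.sinh (p * y) * p := by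
    have e0 : (fun y => hh p y + y * deriv (hh p) y) =ᶠ[𝓝 (0:ℝ)] fun y => Real.cosh (p * y) := Eq1
    have e' := e0.deriv
    filter_upwards [e', ev_analytic hA, ev_deriv_analytic hA] with y hy hy1 hy2
    have d1 : deriv (fun z => hh p z + z * deriv (hh p) z) y
        = deriv (hh p) y + (1 * deriv (hh p) y + y * deriv (deriv (hh p)) y) :=
      (hy1.differentiableAt.hasDerivAt.add
        ((hasDerivAt_id y).mul hy2.differentiableAt.hasDerivAt)).deriv
    have d2 : deriv (fun z => Real.cosh (p * z)) y = Real.sinh (p * y) * p := by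
      have : HasDerivAt (fun z => Real.cosh (p * z)) (Real.sinh (p * y) * p) y := by
        simpa [mul_comm, Function.comp_def] using (Real.hasDerivAt_cosh (p * y)).comp y ((hasDerivAt_id y).const_mul p)
      exact this.deriv
    rw [d1, d2] at hy; linarith
  have := Eq2.self_of_nhds
  simp only [mul_zero, zero_mul, add_zero, Real.sinh_zero, zero_mul] at this
  linarith

lemma deriv2_hh_zero {p : ℝ} (hp : p ≠ 0) : deriv (deriv (hh p)) 0 = p ^ 2 / 3 := by
  have hA := hh_analyticAt hp
  have hA1 : AnalyticAt ℝ (deriv (hh p)) 0 := hA.deriv''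
  have hA2 : AnalyticAt ℝ (deriv (deriv (hh p))) 0 := hA1.deriv''
  have Eq1 : ∀ᶠ y in 𝓝 (0:ℝ), hh p y + y * deriv (hh p) y = Real.cosh (p * y) := by
    filter_upwards [ev_analytic hA] with y hy
    have h1 : deriv (fun x => x * hh p x) y = 1 * hh p y + y * deriv (hh p) y :=
      ((hasDerivAt_id y).mul hy.differentiableAt.hasDerivAt).deriv
    have hfun : (fun x => x * hh p x) = fun x => Real.sinh (p * x) / p := funext (xh_eq hp)
    have h2 : deriv (fun x => x * hh p x) y = Real.cosh (p * y) := by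
      rw [hfun, ((sinh_comp_hasDerivAt p y).div_const p).deriv]
      field_simp
    rw [h2] at h1; linarith
  have Eq2 : (fun y => 2 * deriv (hh p) y + y * deriv (deriv (hh p)) y) =ᶠ[𝓝 (0:ℝ)]
      fun y => Real.sinh (p * y) * p := by
    have e0 : (fun y => hh p y + y * deriv (hh p) y) =ᶠ[𝓝 (0:ℝ)] fun y => Real.cosh (p * y) := Eq1
    have e' := e0.deriv
    filter_upwards [e', ev_analytic hA, ev_deriv_analytic hA] with y hy hy1 hy2
    have d1 : deriv (fun z => hh p z + z * deriv (hh p) z) y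
        = deriv (hh p) y + (1 * deriv (hh p) y + y * deriv (deriv (hh p)) y) :=
      (hy1.differentiableAt.hasDerivAt.add
        ((hasDerivAt_id y).mul hy2.differentiableAt.hasDerivAt)).deriv
    have d2 : deriv (fun z => Real.cosh (p * z)) y = Real.sinh (p * y) * p := by
      have : HasDerivAt (fun z => Real.cosh (p * z)) (Real.sinh (p * y) * p) y := by
        simpa [mul_comm, Function.comp_def] using (Real.hasDerivAt_cosh (p * y)).comp y ((hasDerivAt_id y).const_mul p)
      exact this.deriv
    rw [d1, d2] at hy; linarith
  have d0 := Eq2.deriv_eq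
  have dL : HasDerivAt (fun y => 2 * deriv (hh p) y + y * deriv (deriv (hh p)) y)
      (2 * deriv (deriv (hh p)) 0 + (1 * deriv (deriv (hh p)) 0 + 0 * deriv (deriv (deriv (hh p))) 0)) 0 :=
    (hA1.differentiableAt.hasDerivAt.const_mul 2).add
      ((hasDerivAt_id 0).mul hA2.differentiableAt.hasDerivAt)
  have dR : HasDerivAt (fun y => Real.sinh (p * y) * p) (Real.cosh (p * 0) * p * p) 0 :=
    (sinh_comp_hasDerivAt p 0).mul_const p
  rw [dL.deriv, dR.deriv] at d0
  simp only [mul_zero, zero_mul, one_mul, add_zero, Real.cosh_zero, one_mul] at d0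
  nlinarith [d0]

noncomputable def phi (p q : ℝ) : ℝ → ℝ :=
  fun x => (Real.log (hh p x) - Real.log (hh q x)) / (p - q)

noncomputable def Dphi (p q : ℝ) : ℝ → ℝ :=
  fun x => (deriv (hh p) x / hh p x - deriv (hh q) x / hh q x) / (p - q)

lemma phi_zero {p q : ℝ} (hp : p ≠ 0) (hq : q ≠ 0) : phi p q 0 = 0 := by
  simp [phi, hh_zero hp, hh_zero hq]

lemma Dphi_zero {p q : ℝ} (hp : p ≠ 0) (hq : q ≠ 0) : Dphi p q 0 = 0 := by
  simp [Dphi, deriv_hh_zero hp, deriv_hh_zero hq]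

lemma phi_hasDerivAt {p q : ℝ} (hp : p ≠ 0) (hq : q ≠ 0) :
    ∀ᶠ y in 𝓝 (0:ℝ), HasDerivAt (phi p q) (Dphi p q y) y := by
  filter_upwards [ev_analytic (hh_analyticAt hp), ev_analytic (hh_analyticAt hq)] with y h1 h2
  have hdp : HasDerivAt (fun x => Real.log (hh p x)) (deriv (hh p) y / hh p y) y :=
    h1.differentiableAt.hasDerivAt.log (ne_of_gt (hh_pos hp y))
  have hdq : HasDerivAt (fun x => Real.log (hh q x)) (deriv (hh q) y / hh q y) y :=
    h2.differentiableAt.hasDerivAt.log (ne_of_gt (hh_pos hq y))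
  exact (hdp.sub hdq).div_const (p - q)

lemma Dphi_hasDerivAt_zero {p q : ℝ} (hp : p ≠ 0) (hq : q ≠ 0) (hpq : p ≠ q) :
    HasDerivAt (Dphi p q) ((p + q) / 3) 0 := by
  have hAp := hh_analyticAt hp
  have hAq := hh_analyticAt hq
  have cp : HasDerivAt (fun x => deriv (hh p) x / hh p x)
      ((deriv (deriv (hh p)) 0 * hh p 0 - deriv (hh p) 0 * deriv (hh p) 0) / hh p 0 ^ 2) 0 :=
    hAp.deriv''.differentiableAt.hasDerivAt.div hAp.differentiableAt.hasDerivAt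
      (ne_of_gt (hh_pos hp 0))
  have cq : HasDerivAt (fun x => deriv (hh q) x / hh q x)
      ((deriv (deriv (hh q)) 0 * hh q 0 - deriv (hh q) 0 * deriv (hh q) 0) / hh q 0 ^ 2) 0 :=
    hAq.deriv''.differentiableAt.hasDerivAt.div hAq.differentiableAt.hasDerivAt
      (ne_of_gt (hh_pos hq 0))
  have := (cp.sub cq).div_const (p - q)
  rw [hh_zero hp, hh_zero hq, deriv_hh_zero hp, deriv_hh_zero hq,
    deriv2_hh_zero hp, deriv2_hh_zero hq] at this
  refine this.congr_deriv ?_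
  have hpq' : p - q ≠ 0 := sub_ne_zero.2 hpq
  rw [div_eq_iff hpq']
  ring

noncomputable def S (p q x y : ℝ) : ℝ :=
  (q * (x ^ p - y ^ p) / (p * (x ^ q - y ^ q))) ^ (1 / (p - q))

/-- The Stolarsky mean extended to the diagonal by S(x,x) = x. -/
noncomputable def Sfull (p q x y : ℝ) : ℝ :=
  if x = y then x else S p q x y

noncomputable def E (p q u v : ℝ) : ℝ :=
  Real.log (Sfull p q (Real.exp u) (Real.exp v))

noncomputable def F (a b c d p q x : ℝ) : ℝ :=
  E p q (E a b x (-x)) (E c d x (-x)) - E p q x (-x)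

lemma Sfull_exp {p q : ℝ} (hp : p ≠ 0) (hq : q ≠ 0) (hpq : p ≠ q) (u v : ℝ) :
    Sfull p q (Real.exp u) (Real.exp v)
      = Real.exp ((u + v) / 2 + phi p q ((u - v) / 2)) := by
  rcases eq_or_ne u v with rfl | huv
  · simp [Sfull, phi_zero hp hq, add_self_div_two]
  · have hexp : Real.exp u ≠ Real.exp v := fun h => huv (Real.exp_injective h)
    rw [Sfull, if_neg hexp, S]
    set m := (u + v) / 2 with hm
    set w := (u - v) / 2 with hww
    have hw : w ≠ 0 := by
      rw [hww]; intro h; apply huv; linarith [(div_eq_zero_iff.1 h).resolve_right (by norm_num)]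
    have hu : u = m + w := by rw [hm, hww]; ring
    have hv : v = m - w := by rw [hm, hww]; ring
    have expand : ∀ r : ℝ, Real.exp u ^ r - Real.exp v ^ r
        = Real.exp (r * m) * (2 * (r * w * hh r w)) := by
      intro r
      rcases eq_or_ne r 0 with rfl | hr
      · simp
      · have h1 : Real.exp u ^ r = Real.exp (r * m) * Real.exp (r * w) := by
          rw [hu, ← Real.exp_add, ← Real.exp_mul]; ring_nf
        have h2 : Real.exp v ^ r = Real.exp (r * m) * Real.exp (-(r * w)) := by
          rw [hv, ← Real.exp_add, ← Real.exp_mul]; ring_nf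
        rw [h1, h2, ← mul_sub]
        congr 1
        rw [hh_of_ne hw]
        have hrw : r * w ≠ 0 := mul_ne_zero hr hw
        rw [Real.sinh_eq]
        field_simp
    have key : q * (Real.exp u ^ p - Real.exp v ^ p) / (p * (Real.exp u ^ q - Real.exp v ^ q))
        = Real.exp ((p - q) * (m + phi p q w)) := by
      rw [expand p, expand q]
      have hphiw : Real.exp ((p - q) * phi p q w) = hh p w / hh q w := by
        have : (p - q) * phi p q w = Real.log (hh p w) - Real.log (hh q w) := by
          rw [phi]
          rw [mul_div_cancel₀ _ (sub_ne_zero.2 hpq)]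
        rw [this, Real.exp_sub, Real.exp_log (hh_pos hp w), Real.exp_log (hh_pos hq w)]
      rw [mul_add, Real.exp_add, hphiw, sub_mul, Real.exp_sub]
      have hhp := ne_of_gt (hh_pos hp w)
      have hhq := ne_of_gt (hh_pos hq w)
      have e1 := Real.exp_ne_zero (p * m)
      have e2 := Real.exp_ne_zero (q * m)
      field_simp
    rw [key, ← Real.exp_mul]
    congr 1
    have hpq' : p - q ≠ 0 := sub_ne_zero.2 hpq
    field_simp

lemma E_eq {p q : ℝ} (hp : p ≠ 0) (hq : q ≠ 0) (hpq : p ≠ q) (u v : ℝ) :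
    E p q u v = (u + v) / 2 + phi p q ((u - v) / 2) := by
  rw [E, Sfull_exp hp hq hpq, Real.log_exp]

lemma F_eq {a b c d p q : ℝ} (ha : a ≠ 0) (hb : b ≠ 0) (hab : a ≠ b)
    (hc : c ≠ 0) (hd : d ≠ 0) (hcd : c ≠ d)
    (hp : p ≠ 0) (hq : q ≠ 0) (hpq : p ≠ q) :
    F a b c d p q = fun x => (phi a b x + phi c d x) / 2
      + phi p q ((phi a b x - phi c d x) / 2) - phi p q x := by
  funext x
  have h1 : E a b x (-x) = phi a b x := by
    rw [E_eq ha hb hab]; ring_nf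
  have h2 : E c d x (-x) = phi c d x := by
    rw [E_eq hc hd hcd]; ring_nf
  have h3 : E p q x (-x) = phi p q x := by
    rw [E_eq hp hq hpq]; ring_nf
  rw [F, h1, h2, h3, E_eq hp hq hpq]

lemma main_deriv {a b c d p q : ℝ} (ha : a ≠ 0) (hb : b ≠ 0) (hab : a ≠ b)
    (hc : c ≠ 0) (hd : d ≠ 0) (hcd : c ≠ d)
    (hp : p ≠ 0) (hq : q ≠ 0) (hpq : p ≠ q) :
    deriv (deriv (fun x => (phi a b x + phi c d x) / 2
      + phi p q ((phi a b x - phi c d x) / 2) - phi p q x)) 0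
      = (a + b + c + d) / 6 - (p + q) / 3 := by
  have evab := phi_hasDerivAt ha hb
  have evcd := phi_hasDerivAt hc hd
  have evpq := phi_hasDerivAt hp hq
  have hk_ev : ∀ᶠ y in 𝓝 (0:ℝ), HasDerivAt (fun x => (phi a b x - phi c d x) / 2)
      ((Dphi a b y - Dphi c d y) / 2) y := by
    filter_upwards [evab, evcd] with y h1 h2
    exact (h1.sub h2).div_const 2
  have k0 : (phi a b 0 - phi c d 0) / 2 = 0 := by
    simp [phi_zero ha hb, phi_zero hc hd]
  have hktend : Tendsto (fun x => (phi a b x - phi c d x) / 2) (𝓝 0) (𝓝 0) := by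
    have h := (hk_ev.self_of_nhds).continuousAt
    rwa [ContinuousAt, k0] at h
  have evpqk : ∀ᶠ y in 𝓝 (0:ℝ),
      HasDerivAt (phi p q) (Dphi p q ((phi a b y - phi c d y) / 2)) ((phi a b y - phi c d y) / 2) :=
    hktend.eventually evpq
  have derivG : deriv (fun x => (phi a b x + phi c d x) / 2
        + phi p q ((phi a b x - phi c d x) / 2) - phi p q x)
      =ᶠ[𝓝 (0:ℝ)] fun y => (Dphi a b y + Dphi c d y) / 2
        + Dphi p q ((phi a b y - phi c d y) / 2) * ((Dphi a b y - Dphi c d y) / 2)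
        - Dphi p q y := by
    filter_upwards [evab, evcd, evpq, evpqk, hk_ev] with y h1 h2 h3 h4 h5
    have hcomp : HasDerivAt (fun x => phi p q ((phi a b x - phi c d x) / 2))
        (Dphi p q ((phi a b y - phi c d y) / 2) * ((Dphi a b y - Dphi c d y) / 2)) y :=
      by have := h4.comp y h5; exact this
    exact ((((h1.add h2).div_const 2).add hcomp).sub h3).deriv
  rw [derivG.deriv_eq]
  have hDab := Dphi_hasDerivAt_zero ha hb hab
  have hDcd := Dphi_hasDerivAt_zero hc hd hcd
  have hDpq := Dphi_hasDerivAt_zero hp hq hpq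
  have hDk0 : HasDerivAt (fun y => (Dphi a b y - Dphi c d y) / 2)
      (((a + b) / 3 - (c + d) / 3) / 2) 0 := (hDab.sub hDcd).div_const 2
  have hk0' : HasDerivAt (fun x => (phi a b x - phi c d x) / 2)
      ((Dphi a b 0 - Dphi c d 0) / 2) 0 := hk_ev.self_of_nhds
  have hDpq' : HasDerivAt (Dphi p q) ((p + q) / 3) ((phi a b 0 - phi c d 0) / 2) := by
    rw [k0]; exact hDpq
  have hu : HasDerivAt (fun y => Dphi p q ((phi a b y - phi c d y) / 2))
      ((p + q) / 3 * ((Dphi a b 0 - Dphi c d 0) / 2)) 0 := by have := hDpq'.comp 0 hk0'; exact this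
  have hmul : HasDerivAt (fun y => Dphi p q ((phi a b y - phi c d y) / 2)
        * ((Dphi a b y - Dphi c d y) / 2))
      ((p + q) / 3 * ((Dphi a b 0 - Dphi c d 0) / 2) * ((Dphi a b 0 - Dphi c d 0) / 2)
        + Dphi p q ((phi a b 0 - phi c d 0) / 2) * (((a + b) / 3 - (c + d) / 3) / 2)) 0 :=
    hu.mul hDk0
  have total := (((hDab.add hDcd).div_const 2).add hmul).sub hDpq
  rw [show deriv (fun y => (Dphi a b y + Dphi c d y) / 2 + Dphi p q ((phi a b y - phi c d y) / 2) * ((Dphi a b y - Dphi c d y) / 2) - Dphi p q y) 0 = _ from total.deriv, k0, Dphi_zero hp hq, Dphi_zero ha hb, Dphi_zero hc hd]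
  ring

theorem second_taylor_coefficient (a b c d p q : ℝ)
    (hpq : p * q * (p - q) ≠ 0) (hab : a * b * (a - b) ≠ 0)
    (hcd : c * d * (c - d) ≠ 0) :
    iteratedDeriv 2 (F a b c d p q) 0 / (Nat.factorial 2 : ℝ) =
      (a + b + c + d) / 12 - (p + q) / 6 ∧
    ((∀ x y : ℝ, 0 < x → 0 < y →
        Sfull p q (Sfull a b x y) (Sfull c d x y) = Sfull p q x y) →
      (a + b + c + d) / 4 = (p + q) / 2) := by
  have hp : p ≠ 0 := fun h => hpq (by rw [h]; ring)
  have hq : q ≠ 0 := fun h => hpq (by rw [h]; ring)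
  have hpq' : p ≠ q := fun h => hpq (by rw [h]; ring)
  have ha : a ≠ 0 := fun h => hab (by rw [h]; ring)
  have hb : b ≠ 0 := fun h => hab (by rw [h]; ring)
  have hab' : a ≠ b := fun h => hab (by rw [h]; ring)
  have hc : c ≠ 0 := fun h => hcd (by rw [h]; ring)
  have hd : d ≠ 0 := fun h => hcd (by rw [h]; ring)
  have hcd' : c ≠ d := fun h => hcd (by rw [h]; ring)
  have part1 : iteratedDeriv 2 (F a b c d p q) 0 / (Nat.factorial 2 : ℝ) =
      (a + b + c + d) / 12 - (p + q) / 6 := by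
    rw [F_eq ha hb hab' hc hd hcd' hp hq hpq', iteratedDeriv_succ, iteratedDeriv_one,
      main_deriv ha hb hab' hc hd hcd' hp hq hpq']
    norm_num [Nat.factorial]
    ring
  refine ⟨part1, fun hinv => ?_⟩
  have hF0 : F a b c d p q = fun _ => (0:ℝ) := by
    funext x
    show E p q (E a b x (-x)) (E c d x (-x)) - E p q x (-x) = 0
    have hSab : (0:ℝ) < Sfull a b (Real.exp x) (Real.exp (-x)) := by
      rw [Sfull_exp ha hb hab']; exact Real.exp_pos _
    have hScd : (0:ℝ) < Sfull c d (Real.exp x) (Real.exp (-x)) := by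
      rw [Sfull_exp hc hd hcd']; exact Real.exp_pos _
    have e1 : Real.exp (E a b x (-x)) = Sfull a b (Real.exp x) (Real.exp (-x)) := by
      rw [E, Real.exp_log hSab]
    have e2 : Real.exp (E c d x (-x)) = Sfull c d (Real.exp x) (Real.exp (-x)) := by
      rw [E, Real.exp_log hScd]
    have : E p q (E a b x (-x)) (E c d x (-x))
        = Real.log (Sfull p q (Sfull a b (Real.exp x) (Real.exp (-x)))
            (Sfull c d (Real.exp x) (Real.exp (-x)))) := by
      rw [E, e1, e2]
    rw [this, hinv _ _ (Real.exp_pos x) (Real.exp_pos (-x))]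
    rw [E, sub_self]
  rw [hF0] at part1
  have hzero : iteratedDeriv 2 (fun _ : ℝ => (0:ℝ)) 0 = 0 := by
    simp [iteratedDeriv_succ, iteratedDeriv_zero]
  rw [hzero] at part1
  norm_num at part1
  linarith
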